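/- Let L be a flat of the central essential arrangement H. Then for every face A of H, the set cl(A) ∩ L (the intersection of the closure of A with L) is the closure of a unique face of the induced arrangement H∩L in L. -/

import Mathlib

/-! Basic notions for a (central, essential) arrangement of hyperplanes `H`
in a finite-dimensional real vector space, its faces, flats, the dual
arrangement and its faces, and the big/small dual cones. -/

/-- Two points `x`, `y` lie in the same face of the hyperplane arrangement `H`:
for every hyperplane `W ∈ H` and every linear functional `f` with kernel `W`,
either `f x · f y > 0` or `f x = f y = 0`. -/
def SameFace {V : Type*} [AddCommGroup V] [Module ℝ V]
    (H : Finset (Submodule ℝ V)) (x y : V) : Prop :=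
  ∀ W ∈ H, ∀ f : V →ₗ[ℝ] ℝ, LinearMap.ker f = W →
    (0 < f x * f y ∨ (f x = 0 ∧ f y = 0))

/-- A face of the arrangement `H`: an equivalence class of the relation `SameFace`. -/
def IsFace {V : Type*} [AddCommGroup V] [Module ℝ V]
    (H : Finset (Submodule ℝ V)) (A : Set V) : Prop :=
  ∃ x : V, A = {y | SameFace H x y}

/-- A chamber is an open face. -/
def IsChamber {V : Type*} [AddCommGroup V] [Module ℝ V] [TopologicalSpace V]
    (H : Finset (Submodule ℝ V)) (A : Set V) : Prop :=
  IsFace H A ∧ IsOpen A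

/-- A flat of `H`: an intersection of a subfamily of the hyperplanes
(the empty subfamily gives all of `V`). -/
def IsFlat {V : Type*} [AddCommGroup V] [Module ℝ V]
    (H : Finset (Submodule ℝ V)) (L : Submodule ℝ V) : Prop :=
  ∃ J : Finset (Submodule ℝ V), J ⊆ H ∧ L = J.inf id

/-- Two (continuous) linear functionals `f`, `g` lie in the same face of the dual
arrangement `H∨`: for every 1-dimensional flat `l` of `H` and every `x ∈ l`,
either `f x · g x > 0` or `f x = g x = 0`. -/
def DualSameFace {V : Type*} [NormedAddCommGroup V] [NormedSpace ℝ V]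
    (H : Finset (Submodule ℝ V)) (f g : V →L[ℝ] ℝ) : Prop :=
  ∀ l : Submodule ℝ V, IsFlat H l → Module.finrank ℝ l = 1 →
    ∀ x ∈ l, (0 < f x * g x ∨ (f x = 0 ∧ g x = 0))

/-- A face of the dual arrangement `H∨` in the dual space. -/
def IsDualFace {V : Type*} [NormedAddCommGroup V] [NormedSpace ℝ V]
    (H : Finset (Submodule ℝ V)) (A : Set (V →L[ℝ] ℝ)) : Prop :=
  ∃ f : V →L[ℝ] ℝ, A = {g | DualSameFace H f g}

/-- A chamber of the dual arrangement: an open dual face. -/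
def IsDualChamber {V : Type*} [NormedAddCommGroup V] [NormedSpace ℝ V]
    (H : Finset (Submodule ℝ V)) (A : Set (V →L[ℝ] ℝ)) : Prop :=
  IsDualFace H A ∧ IsOpen A

/-- The big dual cone `U(A∨)` of a dual face `A∨`. -/
def bigCone {V : Type*} [NormedAddCommGroup V] [NormedSpace ℝ V]
    (A : Set (V →L[ℝ] ℝ)) : Set V :=
  {x | ∀ f ∈ A, 0 ≤ f x}

/-- The small dual cone `V(A∨)` of a dual face `A∨`: the intersection of the big
dual cones of all dual chambers `B∨` with `A∨ ≤ B∨`. -/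
def smallCone {V : Type*} [NormedAddCommGroup V] [NormedSpace ℝ V]
    (H : Finset (Submodule ℝ V)) (A : Set (V →L[ℝ] ℝ)) : Set V :=
  ⋂ B ∈ {B : Set (V →L[ℝ] ℝ) | IsDualChamber H B ∧ A ⊆ closure B}, bigCone B

open Filter Topology

section Aux
set_option linter.unusedSectionVars false
variable {M : Type*} [NormedAddCommGroup M] [NormedSpace ℝ M] [FiniteDimensional ℝ M]
variable {G : Finset (Submodule ℝ M)}

lemma sameFace_refl (x : M) : SameFace G x x := by
  intro W _ f _
  rcases eq_or_ne (f x) 0 with h | h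
  · exact Or.inr ⟨h, h⟩
  · exact Or.inl (mul_self_pos.mpr h)

lemma sameFace_symm {x y : M} (h : SameFace G x y) : SameFace G y x := by
  intro W hW f hf
  rcases h W hW f hf with h1 | h1
  · exact Or.inl (by rw [mul_comm]; exact h1)
  · exact Or.inr ⟨h1.2, h1.1⟩

lemma sameFace_trans {x y z : M} (h1 : SameFace G x y) (h2 : SameFace G y z) :
    SameFace G x z := by
  intro W hW f hf
  rcases h1 W hW f hf with a | a
  · rcases h2 W hW f hf with b | b
    · exact Or.inl (by nlinarith [mul_pos a b, sq_nonneg (f y)])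
    · exact absurd a (by rw [b.1]; simp)
  · rcases h2 W hW f hf with b | b
    · exact absurd b (by rw [a.2]; simp)
    · exact Or.inr ⟨a.1, b.2⟩

lemma sign_trans {a b c : ℝ} (h1 : 0 < a * b) (h2 : 0 < a * c) : 0 < b * c := by
  nlinarith [mul_pos h1 h2, sq_nonneg a]

lemma closure_face (x : M) :
    closure {y | SameFace G x y} =
      {y | ∀ W ∈ G, ∀ f : M →ₗ[ℝ] ℝ, LinearMap.ker f = W → (0 < f x * f y ∨ f y = 0)} := by
  apply subset_antisymm
  · apply closure_minimal
    · intro y hy W hW f hf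
      rcases hy W hW f hf with h | h
      · exact Or.inl h
      · exact Or.inr h.2
    · have heq : {y : M | ∀ W ∈ G, ∀ f : M →ₗ[ℝ] ℝ, LinearMap.ker f = W →
            (0 < f x * f y ∨ f y = 0)}
          = ⋂ W ∈ G, ⋂ f : M →ₗ[ℝ] ℝ, ⋂ _ : LinearMap.ker f = W,
              {y | 0 < f x * f y ∨ f y = 0} := by
        ext y; simp only [Set.mem_setOf_eq, Set.mem_iInter]
      rw [heq]
      refine isClosed_iInter fun W => isClosed_iInter fun _ => ?_
      refine isClosed_iInter fun f => isClosed_iInter fun _ => ?_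
      have hc : Continuous f := f.continuous_of_finiteDimensional
      rcases lt_trichotomy (f x) 0 with h | h | h
      · have : {y : M | 0 < f x * f y ∨ f y = 0} = f ⁻¹' Set.Iic 0 := by
          ext y
          simp only [Set.mem_setOf_eq, Set.mem_preimage, Set.mem_Iic]
          constructor
          · rintro (h1 | h1)
            · nlinarith
            · exact le_of_eq h1
          · intro h1
            rcases lt_or_eq_of_le h1 with h2 | h2
            · exact Or.inl (by nlinarith)
            · exact Or.inr h2
        rw [this]; exact IsClosed.preimage hc isClosed_Iic
      · have : {y : M | 0 < f x * f y ∨ f y = 0} = f ⁻¹' {0} := by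
          ext y
          simp only [Set.mem_setOf_eq, Set.mem_preimage, Set.mem_singleton_iff, h]
          constructor
          · rintro (h1 | h1)
            · simp at h1
            · exact h1
          · exact fun h1 => Or.inr h1
        rw [this]; exact IsClosed.preimage hc isClosed_singleton
      · have : {y : M | 0 < f x * f y ∨ f y = 0} = f ⁻¹' Set.Ici 0 := by
          ext y
          simp only [Set.mem_setOf_eq, Set.mem_preimage, Set.mem_Ici]
          constructor
          · rintro (h1 | h1)
            · nlinarith
            · exact ge_of_eq h1
          · intro h1
            rcases lt_or_eq_of_le h1 with h2 | h2
            · exact Or.inl (by nlinarith)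
            · exact Or.inr h2.symm
        rw [this]; exact IsClosed.preimage hc isClosed_Ici
  · intro y hy
    have key : ∀ t : ℝ, 0 < t → y + t • x ∈ {y | SameFace G x y} := by
      intro t ht W hW f hf
      have hft : f (y + t • x) = f y + t * f x := by
        simp [map_add, map_smul]
      rcases hy W hW f hf with h | h
      · left
        rw [hft]
        nlinarith [mul_nonneg ht.le (sq_nonneg (f x))]
      · rcases eq_or_ne (f x) 0 with hx | hx
        · exact Or.inr ⟨hx, by rw [hft, h, hx]; ring⟩
        · left
          rw [hft, h]
          nlinarith [mul_self_pos.mpr hx]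
    have hts : Tendsto (fun t : ℝ => y + t • x) (𝓝[>] (0:ℝ)) (𝓝 y) := by
      have h0 : Tendsto (fun t : ℝ => y + t • x) (𝓝 (0:ℝ)) (𝓝 (y + (0:ℝ) • x)) := by
        exact (continuous_const.add (continuous_id.smul continuous_const)).tendsto 0
      simpa using h0.mono_left nhdsWithin_le_nhds
    exact mem_closure_of_tendsto hts
      (eventually_nhdsWithin_of_forall fun t ht => key t (Set.mem_Ioi.mp ht))

lemma proportional {f g : M →ₗ[ℝ] ℝ} (hf : f ≠ 0)
    (h : LinearMap.ker f = LinearMap.ker g) :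
    ∃ c : ℝ, c ≠ 0 ∧ ∀ v, g v = c * f v := by
  obtain ⟨u, hu⟩ : ∃ u, f u ≠ 0 := by
    by_contra h'
    push_neg at h'
    exact hf (LinearMap.ext fun v => by simp [h' v])
  have hgu : g u ≠ 0 := by
    intro h0
    have : u ∈ LinearMap.ker g := h0
    rw [← h] at this
    exact hu this
  refine ⟨g u / f u, div_ne_zero hgu hu, fun v => ?_⟩
  have hv : f (v - (f v / f u) • u) = 0 := by
    simp only [map_sub, map_smul, smul_eq_mul]
    field_simp
    ring
  have hker : v - (f v / f u) • u ∈ LinearMap.ker g := by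
    rw [← h]; exact hv
  have hg : g v - (f v / f u) * g u = 0 := by
    simpa [map_sub, map_smul, smul_eq_mul] using hker
  field_simp at hg ⊢
  linarith

end Aux

/-- for a flat `L` of `H` and any face `A` of `H`, the set
`cl(A) ∩ L` is the closure of a unique face of the induced arrangement `H∩L`. -/
theorem statement17 {V : Type*} [NormedAddCommGroup V] [NormedSpace ℝ V]
    [FiniteDimensional ℝ V] (H : Finset (Submodule ℝ V))
    (hHyp : ∀ W ∈ H, ∃ f : V →ₗ[ℝ] ℝ, f ≠ 0 ∧ LinearMap.ker f = W)
    (hEss : (⋂ W ∈ H, (W : Set V)) = {0})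
    (L : Submodule ℝ V) (hL : IsFlat H L)
    (Hind : Finset (Submodule ℝ ↥L))
    (hHind : ∀ W : Submodule ℝ ↥L, W ∈ Hind ↔
      ∃ W' ∈ H, ¬ L ≤ W' ∧ W = W'.comap L.subtype)
    (A : Set V) (hA : IsFace H A) :
    ∃! B : Set ↥L, IsFace Hind B ∧ closure B = {x : ↥L | (x : V) ∈ closure A} := by
  classical
  obtain ⟨x, rfl⟩ := hA
  rw [closure_face x]
  set Cset : Set ↥L := {p : ↥L | ∀ W ∈ H, ∀ f : V →ₗ[ℝ] ℝ, LinearMap.ker f = W →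
      (0 < f x * f (p : V) ∨ f (p : V) = 0)} with hCset
  have hgoal_set : {p : ↥L | (p : V) ∈
      {y | ∀ W ∈ H, ∀ f : V →ₗ[ℝ] ℝ, LinearMap.ker f = W → (0 < f x * f y ∨ f y = 0)}}
      = Cset := rfl
  rw [hgoal_set]
  -- basic properties of Cset
  have hC0 : (0 : ↥L) ∈ Cset := by
    intro W hW f hf
    right
    simp
  have hCadd : ∀ p q : ↥L, p ∈ Cset → q ∈ Cset → p + q ∈ Cset := by
    intro p q hp hq W hW f hf
    have hpq : f ((p + q : ↥L) : V) = f (p : V) + f (q : V) := by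
      push_cast
      simp [map_add]
    rcases hp W hW f hf with h1 | h1 <;> rcases hq W hW f hf with h2 | h2
    · left; rw [hpq]; nlinarith
    · left; rw [hpq, h2]; simpa using h1
    · left; rw [hpq, h1]; simpa using h2
    · right; rw [hpq, h1, h2]; ring
  -- choose representatives
  let pick : Submodule ℝ V → ↥L := fun W =>
    if h : ∃ p : ↥L, p ∈ Cset ∧ (p : V) ∉ W then h.choose else 0
  have hpickC : ∀ W, pick W ∈ Cset := by
    intro W
    by_cases h : ∃ p : ↥L, p ∈ Cset ∧ (p : V) ∉ W
    · have hp : pick W = h.choose := dif_pos h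
      rw [hp]; exact h.choose_spec.1
    · have hp : pick W = 0 := dif_neg h
      rw [hp]; exact hC0
  set z : ↥L := ∑ W ∈ H, pick W with hz
  have hzC : z ∈ Cset :=
    Finset.sum_induction pick (· ∈ Cset) hCadd hC0 (fun W _ => hpickC W)
  have hfz : ∀ f : V →ₗ[ℝ] ℝ, f (z : V) = ∑ W ∈ H, f ((pick W : ↥L) : V) := by
    intro f
    rw [hz]
    push_cast
    rw [map_sum]
  have zkey : ∀ W ∈ H, ∀ f : V →ₗ[ℝ] ℝ, LinearMap.ker f = W →
      (∃ p : ↥L, p ∈ Cset ∧ (p : V) ∉ W) → 0 < f x * f (z : V) := by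
    intro W hW f hf hex
    have : f x * f (z : V) = ∑ W' ∈ H, f x * f ((pick W' : ↥L) : V) := by
      rw [hfz f, Finset.mul_sum]
    rw [this]
    apply Finset.sum_pos'
    · intro W' _
      rcases hpickC W' W hW f hf with h | h
      · exact le_of_lt h
      · rw [h]; simp
    · refine ⟨W, hW, ?_⟩
      have hp : pick W = hex.choose := dif_pos hex
      have hspec := hex.choose_spec
      have hne : f ((pick W : ↥L) : V) ≠ 0 := by
        rw [hp]
        intro h0
        have hm : (hex.choose : V) ∈ W := by
          have hm0 : (hex.choose : V) ∈ LinearMap.ker f := LinearMap.mem_ker.mpr h0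
          rwa [hf] at hm0
        exact hspec.2 hm
      rcases hpickC W W hW f hf with h | h
      · exact h
      · exact absurd h hne
  -- the candidate face
  have hBclos : closure {p : ↥L | SameFace Hind z p} = Cset := by
    rw [closure_face z]
    ext p
    constructor
    · -- ⊆ Cset
      intro hp W hW f hf
      by_cases hLW : L ≤ W
      · right
        have : (p : V) ∈ LinearMap.ker f := by rw [hf]; exact hLW p.2
        exact this
      · have hW' : W.comap L.subtype ∈ Hind := (hHind _).mpr ⟨W, hW, hLW, rfl⟩
        have hker' : LinearMap.ker (f.comp L.subtype) = W.comap L.subtype := by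
          rw [LinearMap.ker_comp, hf]
        rcases hp (W.comap L.subtype) hW' (f.comp L.subtype) hker' with h | h
        · -- 0 < f z * f p
          have hzp : 0 < f (z : V) * f (p : V) := h
          have hzne : f (z : V) ≠ 0 := by
            intro h0; rw [h0, zero_mul] at hzp; exact lt_irrefl 0 hzp
          have hxz : 0 < f x * f (z : V) := by
            rcases hzC W hW f hf with h1 | h1
            · exact h1
            · exact absurd h1 hzne
          exact Or.inl (sign_trans (a := f (z : V))
            (by rw [mul_comm]; exact hxz) hzp)
        · exact Or.inr h
    · -- Cset ⊆
      intro hp W' hW' g hg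
      obtain ⟨W, hW, hLW, rfl⟩ := (hHind W').mp hW'
      obtain ⟨f, hf0, hfker⟩ := hHyp W hW
      have hker' : LinearMap.ker (f.comp L.subtype) = W.comap L.subtype := by
        rw [LinearMap.ker_comp, hfker]
      have hfL0 : f.comp L.subtype ≠ 0 := by
        intro h0
        apply hLW
        intro v hv
        have : (⟨v, hv⟩ : ↥L) ∈ LinearMap.ker (f.comp L.subtype) := by rw [h0]; simp
        have : f v = 0 := this
        rw [← hfker]; exact this
      obtain ⟨c, hc, hcg⟩ := proportional hfL0 (hker'.trans hg.symm)
      have hgz : g z = c * f (z : V) := hcg z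
      have hgp : g p = c * f (p : V) := hcg p
      by_cases hfp : f (p : V) = 0
      · right; rw [hgp, hfp, mul_zero]
      · have hxp : 0 < f x * f (p : V) := by
          rcases hp W hW f hfker with h | h
          · exact h
          · exact absurd h hfp
        have hpnW : (p : V) ∉ W := by
          intro hmem
          apply hfp
          rw [← hfker] at hmem
          exact hmem
        have hxz : 0 < f x * f (z : V) := zkey W hW f hfker ⟨p, hp, hpnW⟩
        have hzp : 0 < f (z : V) * f (p : V) := sign_trans hxz hxp
        left
        rw [hgz, hgp]
        calc (0:ℝ) < c * c * (f (z : V) * f (p : V)) :=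
              mul_pos (mul_self_pos.mpr hc) hzp
          _ = c * f (z : V) * (c * f (p : V)) := by ring
  refine ⟨{p : ↥L | SameFace Hind z p}, ⟨⟨z, rfl⟩, hBclos⟩, ?_⟩
  -- uniqueness
  rintro B' ⟨⟨z', rfl⟩, hclos'⟩
  have hAA : {y : ↥L | ∀ W ∈ Hind, ∀ f : ↥L →ₗ[ℝ] ℝ, LinearMap.ker f = W →
        (0 < f z' * f y ∨ f y = 0)}
      = {y : ↥L | ∀ W ∈ Hind, ∀ f : ↥L →ₗ[ℝ] ℝ, LinearMap.ker f = W →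
        (0 < f z * f y ∨ f y = 0)} := by
    rw [← closure_face z', ← closure_face z, hclos', hBclos]
  have hself : ∀ w : ↥L, w ∈ {y : ↥L | ∀ W ∈ Hind, ∀ f : ↥L →ₗ[ℝ] ℝ, LinearMap.ker f = W →
      (0 < f w * f y ∨ f y = 0)} := by
    intro w W hW g hg
    rcases eq_or_ne (g w) 0 with h | h
    · exact Or.inr h
    · exact Or.inl (mul_self_pos.mpr h)
  have hz'A : ∀ W ∈ Hind, ∀ g : ↥L →ₗ[ℝ] ℝ, LinearMap.ker g = W →
      (0 < g z * g z' ∨ g z' = 0) := by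
    have h0 := hself z'
    rw [hAA] at h0
    exact h0
  have hzA : ∀ W ∈ Hind, ∀ g : ↥L →ₗ[ℝ] ℝ, LinearMap.ker g = W →
      (0 < g z' * g z ∨ g z = 0) := by
    have h0 := hself z
    rw [← hAA] at h0
    exact h0
  have hsf : SameFace Hind z' z := by
    intro W hW g hg
    rcases hzA W hW g hg with h1 | h1
    · exact Or.inl h1
    · rcases hz'A W hW g hg with h2 | h2
      · rw [h1, zero_mul] at h2
        exact absurd h2 (lt_irrefl 0)
      · exact Or.inr ⟨h2, h1⟩
  ext p
  constructor
  · intro hp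
    exact sameFace_trans (sameFace_symm hsf) hp
  · intro hp
    exact sameFace_trans hsf hp
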